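/- Let G be a finitely generated infinite group and π : G → H a surjective group homomorphism onto an infinite group H. Let d_G be a word metric on G and d_H a word metric on H (with respect to finite symmetric generating sets), with |x|_G = d_G(x,1) and |q|_H = d_H(q,1). Assume there exists C ≥ 1 such that |π(x)|_H ≤ C·|x|_G for every x ∈ G, and for every q ∈ H there exists x ∈ G with π(x) = q and |x|_G ≤ C·|q|_H. Fix an integer M > C and define D(x,y) = max{ d_G(x,y), M·d_H(π(x),π(y)) }. Then for every metric functional h ∈ ∂(H,d_H) there exists a metric functional f ∈ ∂(G,D) with f(x) = M·h(π(x)) for all x ∈ G; in particular the orbit of f under G has cardinality at most the cardinality of the orbit of h under H. -/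

import Mathlib

open Filter Topology

section Defs

variable {G : Type*}

/-- `d` is a metric on `X` (nonnegative, vanishing exactly on the diagonal,
symmetric, triangle inequality). -/
def IsMetric {X : Type*} (d : X → X → ℝ) : Prop :=
  (∀ x y, 0 ≤ d x y) ∧ (∀ x y, d x y = 0 ↔ x = y) ∧ (∀ x y, d x y = d y x) ∧
    (∀ x y z, d x z ≤ d x y + d y z)

/-- The Busemann function of `x` with base point `1`: `b_x(y) = d(x,y) - d(x,1)`. -/
def bus [Group G] (d : G → G → ℝ) (x y : G) : ℝ := d x y - d x 1

/-- `h` belongs to the metric-functional boundary `∂(G,d)`: it is a pointwise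
limit of Busemann functions and is not itself a Busemann function. -/
def InBoundary [Group G] (d : G → G → ℝ) (h : G → ℝ) : Prop :=
  (∃ u : ℕ → G, ∀ y : G, Tendsto (fun n => bus d (u n) y) atTop (𝓝 (h y))) ∧
    ∀ x : G, h ≠ bus d x

/-- The action of `x ∈ G` on functions: `(x.h)(y) = h(x⁻¹y) - h(x⁻¹)`. -/
def act [Group G] (x : G) (h : G → ℝ) : G → ℝ := fun y => h (x⁻¹ * y) - h x⁻¹

/-- `S` is a finite symmetric generating set of `G`. -/
def FinSymGen [Group G] (S : Set G) : Prop :=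
  S.Finite ∧ (∀ s ∈ S, s⁻¹ ∈ S) ∧ Subgroup.closure S = ⊤

/-- The word length of `x` with respect to `S`: the least `n` such that `x`
is a product of `n` elements of `S`. -/
noncomputable def wordLength [Group G] (S : Set G) (x : G) : ℕ :=
  sInf {n : ℕ | ∃ l : List G, (∀ s ∈ l, s ∈ S) ∧ l.length = n ∧ l.prod = x}

/-- The word metric with respect to `S` : `d_S(x,y) = |x⁻¹y|_S`. -/
noncomputable def wordDist [Group G] (S : Set G) (x y : G) : ℝ :=
  (wordLength S (x⁻¹ * y) : ℝ)

/-- `(G,d)` is quasi-isometric to a Cayley graph of `G`. -/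
def QIToCayley [Group G] (d : G → G → ℝ) : Prop :=
  ∃ S : Set G, FinSymGen S ∧ ∃ φ : G → G, ∃ C : ℝ, 0 < C ∧
    (∀ y : G, ∃ x : G, wordDist S (φ x) y ≤ C) ∧
    ∀ x y : G, C⁻¹ * d x y - C ≤ wordDist S (φ x) (φ y) ∧
      wordDist S (φ x) (φ y) ≤ C * d x y + C

/-- A Banach metric on `G`: an integer-valued, left-invariant, proper metric,
quasi-isometric to a Cayley graph, all of whose metric functionals are unbounded. -/
def IsBanachMetric [Group G] (d : G → G → ℝ) : Prop :=
  IsMetric d ∧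
  (∀ x y : G, ∃ n : ℕ, d x y = n) ∧
  (∀ x y z : G, d (z * x) (z * y) = d x y) ∧
  (∀ r : ℝ, {x : G | d x 1 ≤ r}.Finite) ∧
  QIToCayley d ∧
  ∀ h : G → ℝ, InBoundary d h → ¬ ∃ B : ℝ, ∀ x : G, |h x| ≤ B

/-- A virtual homomorphism on `G`: a function `φ : G → ℤ` restricting to a
nontrivial homomorphism on some finite index subgroup. -/
def IsVirtualHom [Group G] (φ : G → ℤ) : Prop :=
  ∃ H : Subgroup G, H.FiniteIndex ∧
    (∀ a b : G, a ∈ H → b ∈ H → φ (a * b) = φ a + φ b) ∧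
    ∃ a ∈ H, φ a ≠ 0

end Defs

section Aux

variable {G : Type*} [Group G] {S : Set G}

lemma wl_exists_rep (hS : FinSymGen S) (x : G) :
    ∃ l : List G, (∀ s ∈ l, s ∈ S) ∧ l.prod = x := by
  have hx : x ∈ Subgroup.closure S := by rw [hS.2.2]; trivial
  induction hx using Subgroup.closure_induction with
  | mem s hs => exact ⟨[s], by simpa using hs, by simp⟩
  | one => exact ⟨[], by simp, rfl⟩
  | mul a b _ _ ha hb =>
      obtain ⟨l1, hl1, hp1⟩ := ha
      obtain ⟨l2, hl2, hp2⟩ := hb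
      refine ⟨l1 ++ l2, ?_, by simp [hp1, hp2]⟩
      intro s hs
      rcases List.mem_append.1 hs with h | h
      exacts [hl1 s h, hl2 s h]
  | inv a _ ha =>
      obtain ⟨l, hl, hp⟩ := ha
      refine ⟨(l.map fun s => s⁻¹).reverse, ?_, ?_⟩
      · intro s hs
        simp only [List.mem_reverse, List.mem_map] at hs
        obtain ⟨t, ht, rfl⟩ := hs
        exact hS.2.1 t (hl t ht)
      · rw [← List.prod_inv_reverse, hp]

lemma wl_spec (hS : FinSymGen S) (x : G) :
    ∃ l : List G, (∀ s ∈ l, s ∈ S) ∧ l.length = wordLength S x ∧ l.prod = x := by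
  obtain ⟨l, hl, hp⟩ := wl_exists_rep hS x
  have hne : {n : ℕ | ∃ l : List G, (∀ s ∈ l, s ∈ S) ∧ l.length = n ∧ l.prod = x}.Nonempty :=
    ⟨l.length, l, hl, rfl, hp⟩
  exact Nat.sInf_mem hne

lemma wl_le {x : G} {l : List G} (hl : ∀ s ∈ l, s ∈ S) (hp : l.prod = x) :
    wordLength S x ≤ l.length := Nat.sInf_le ⟨l, hl, rfl, hp⟩

lemma wl_mul (hS : FinSymGen S) (x y : G) :
    wordLength S (x * y) ≤ wordLength S x + wordLength S y := by
  obtain ⟨l1, hl1, hlen1, hp1⟩ := wl_spec hS x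
  obtain ⟨l2, hl2, hlen2, hp2⟩ := wl_spec hS y
  have := wl_le (l := l1 ++ l2) (x := x * y)
    (by intro s hs; rcases List.mem_append.1 hs with h | h; exacts [hl1 s h, hl2 s h])
    (by simp [hp1, hp2])
  simpa [hlen1, hlen2] using this

lemma wl_inv_le (hS : FinSymGen S) (x : G) : wordLength S x⁻¹ ≤ wordLength S x := by
  obtain ⟨l, hl, hlen, hp⟩ := wl_spec hS x
  have := wl_le (l := (l.map fun s => s⁻¹).reverse) (x := x⁻¹)
    (by
      intro s hs
      simp only [List.mem_reverse, List.mem_map] at hs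
      obtain ⟨t, ht, rfl⟩ := hs
      exact hS.2.1 t (hl t ht))
    (by rw [← List.prod_inv_reverse, hp])
  simpa [hlen] using this

lemma wl_inv (hS : FinSymGen S) (x : G) : wordLength S x⁻¹ = wordLength S x :=
  le_antisymm (wl_inv_le hS x) (by simpa using wl_inv_le hS x⁻¹)

lemma wl_prodset_finite (hfin : S.Finite) (n : ℕ) :
    {x : G | ∃ l : List G, (∀ s ∈ l, s ∈ S) ∧ l.length ≤ n ∧ l.prod = x}.Finite := by
  induction n with
  | zero =>
      refine Set.Finite.subset (Set.finite_singleton 1) ?_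
      rintro x ⟨l, -, hlen, hp⟩
      have hl : l = [] := List.length_eq_zero_iff.1 (Nat.le_zero.1 hlen)
      subst hl
      simp at hp
      simp [← hp]
  | succ n ih =>
      refine Set.Finite.subset ((Set.finite_singleton (1 : G)).union
        (Set.Finite.image2 (· * ·) hfin ih)) ?_
      rintro x ⟨l, hl, hlen, hp⟩
      cases l with
      | nil => left; simp at hp; simp [← hp]
      | cons a l =>
          right
          refine Set.mem_image2.2 ⟨a, hl a List.mem_cons_self, l.prod,
            ⟨l, fun s hs => hl s (List.mem_cons_of_mem a hs), ?_, rfl⟩, by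
              rw [← hp, List.prod_cons]⟩
          simpa using Nat.succ_le_succ_iff.1 hlen

lemma wl_ball_finite (hS : FinSymGen S) (n : ℕ) : {x : G | wordLength S x ≤ n}.Finite := by
  refine (wl_prodset_finite hS.1 n).subset ?_
  intro x hx
  obtain ⟨l, hl, hlen, hp⟩ := wl_spec hS x
  exact ⟨l, hl, by rw [hlen]; exact hx, hp⟩

end Aux


section Aux2

lemma wl_tendsto_atTop {H : Type*} [Group H] {T : Set H} (hT : FinSymGen T)
    {h : H → ℝ} {u : ℕ → H}
    (hu : ∀ y : H, Tendsto (fun n => bus (wordDist T) (u n) y) atTop (𝓝 (h y)))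
    (hnb : ∀ x : H, h ≠ bus (wordDist T) x) (m : ℕ) :
    ∀ᶠ n in atTop, m ≤ wordLength T (u n) := by
  by_contra hc
  rw [not_eventually] at hc
  have hinf : {n : ℕ | ¬ m ≤ wordLength T (u n)}.Infinite :=
    Nat.frequently_atTop_iff_infinite.1 hc
  have hsub : {n : ℕ | ¬ m ≤ wordLength T (u n)} ⊆
      ⋃ q ∈ {q : H | wordLength T q ≤ m}, {n : ℕ | u n = q} := by
    intro n hn
    exact Set.mem_biUnion (le_of_lt (not_le.1 hn)) rfl
  obtain ⟨q, -, hqinf⟩ : ∃ q ∈ {q : H | wordLength T q ≤ m}, {n : ℕ | u n = q}.Infinite := by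
    by_contra hall
    push_neg at hall
    have hfin : (⋃ q ∈ {q : H | wordLength T q ≤ m}, {n : ℕ | u n = q}).Finite :=
      Set.Finite.biUnion (wl_ball_finite hT m) fun q hq => hall q hq
    exact hinf (hfin.subset hsub)
  have hfreq : ∃ᶠ n in atTop, u n = q := Nat.frequently_atTop_iff_infinite.2 hqinf
  have hne : (atTop ⊓ 𝓟 {n : ℕ | u n = q}).NeBot := frequently_iff_neBot.1 hfreq
  apply hnb q
  funext y
  have t1 : Tendsto (fun n => bus (wordDist T) (u n) y) (atTop ⊓ 𝓟 {n : ℕ | u n = q})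
      (𝓝 (h y)) := (hu y).mono_left inf_le_left
  have t2 : Tendsto (fun n => bus (wordDist T) (u n) y) (atTop ⊓ 𝓟 {n : ℕ | u n = q})
      (𝓝 (bus (wordDist T) q y)) := by
    have hev : ∀ᶠ n in atTop ⊓ 𝓟 {n : ℕ | u n = q}, u n = q :=
      eventually_inf_principal.2 (Eventually.of_forall fun n hn => hn)
    have tc : Tendsto (fun _ : ℕ => bus (wordDist T) q y) (atTop ⊓ 𝓟 {n : ℕ | u n = q})
        (𝓝 (bus (wordDist T) q y)) := tendsto_const_nhds
    refine Tendsto.congr' ?_ tc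
    filter_upwards [hev] with n hn
    rw [hn]
  exact tendsto_nhds_unique t1 t2

end Aux2


/-- With `D = max(d_G, M·d_H∘π)` as in the construction, every
metric functional `h ∈ ∂(H,d_H)` lifts to `f ∈ ∂(G,D)` with `f = M·h∘π`; in
particular the orbit of `f` injects into the orbit of `h`. -/
theorem boundary_lift_of_max_word_metric
    {G H : Type*} [Group G] [Group H] [Infinite G] [Infinite H]
    (π : G →* H) (hπ : Function.Surjective π)
    (S : Set G) (hS : FinSymGen S) (T : Set H) (hT : FinSymGen T)
    (C : ℝ) (hC : 1 ≤ C)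
    (h1 : ∀ x : G, (wordLength T (π x) : ℝ) ≤ C * (wordLength S x : ℝ))
    (h2 : ∀ q : H, ∃ x : G, π x = q ∧ (wordLength S x : ℝ) ≤ C * (wordLength T q : ℝ))
    (M : ℤ) (hM : C < (M : ℝ)) :
    ∀ h : H → ℝ, InBoundary (wordDist T) h →
      ∃ f : G → ℝ,
        InBoundary
          (fun x y : G => max (wordDist S x y) ((M : ℝ) * wordDist T (π x) (π y))) f ∧
        (∀ x : G, f x = (M : ℝ) * h (π x)) ∧
        ∃ ι : (Set.range fun x : G => act x f) → (Set.range fun x : H => act x h),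
          Function.Injective ι := by
  intro h hh
  obtain ⟨⟨u, hu⟩, hnb⟩ := hh
  have hM0 : (0 : ℝ) < (M : ℝ) := lt_of_lt_of_le (lt_of_lt_of_le zero_lt_one hC) hM.le
  choose v hv1 hv2 using fun n => h2 (u n)
  refine ⟨fun x => (M : ℝ) * h (π x), ⟨⟨v, ?_⟩, ?_⟩, fun x => rfl, ?_⟩
  · -- pointwise convergence of Busemann functions of D at lifts v n
    intro y
    obtain ⟨m, hm⟩ : ∃ m : ℕ,
        (wordLength S y : ℝ) + (M : ℝ) * (wordLength T (π y) : ℝ) ≤ ((M : ℝ) - C) * m := by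
      obtain ⟨m, hm⟩ := exists_nat_ge
        (((wordLength S y : ℝ) + (M : ℝ) * (wordLength T (π y) : ℝ)) / ((M : ℝ) - C))
      refine ⟨m, ?_⟩
      rw [div_le_iff₀ (by linarith)] at hm
      linarith [hm]
    have hev : ∀ᶠ n in atTop,
        bus (fun x y : G => max (wordDist S x y) ((M : ℝ) * wordDist T (π x) (π y))) (v n) y
          = (M : ℝ) * bus (wordDist T) (u n) (π y) := by
      filter_upwards [wl_tendsto_atTop hT hu hnb m] with n hn
      have hn' : (m : ℝ) ≤ (wordLength T (u n) : ℝ) := by exact_mod_cast hn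
      have hb : (wordLength S (v n) : ℝ) ≤ C * (wordLength T (u n) : ℝ) := hv2 n
      have i1 : (wordLength S ((v n)⁻¹ * y) : ℝ)
          ≤ (wordLength S (v n) : ℝ) + (wordLength S y : ℝ) := by
        have h' : wordLength S ((v n)⁻¹ * y) ≤ wordLength S (v n) + wordLength S y := by
          calc wordLength S ((v n)⁻¹ * y) ≤ wordLength S (v n)⁻¹ + wordLength S y :=
                wl_mul hS _ _
            _ = _ := by rw [wl_inv hS]
        exact_mod_cast h'
      have i2 : (wordLength T (u n) : ℝ) - (wordLength T (π y) : ℝ)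
          ≤ (wordLength T ((u n)⁻¹ * π y) : ℝ) := by
        have h' : wordLength T (u n) ≤ wordLength T ((u n)⁻¹ * π y) + wordLength T (π y) := by
          have h'' := wl_mul hT ((u n)⁻¹ * π y) (π y)⁻¹
          rw [mul_inv_cancel_right, wl_inv hT, wl_inv hT] at h''
          exact h''
        have : (wordLength T (u n) : ℝ)
            ≤ (wordLength T ((u n)⁻¹ * π y) : ℝ) + (wordLength T (π y) : ℝ) := by
          exact_mod_cast h'
        linarith
      have e1 : max (wordDist S (v n) y) ((M : ℝ) * wordDist T (π (v n)) (π y))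
          = (M : ℝ) * wordDist T (π (v n)) (π y) := by
        apply max_eq_right
        rw [hv1 n]
        show (wordLength S ((v n)⁻¹ * y) : ℝ) ≤ (M : ℝ) * (wordLength T ((u n)⁻¹ * π y) : ℝ)
        have p1 : ((M : ℝ) - C) * (m : ℝ) ≤ ((M : ℝ) - C) * (wordLength T (u n) : ℝ) :=
          mul_le_mul_of_nonneg_left hn' (by linarith)
        have p2 : (M : ℝ) * ((wordLength T (u n) : ℝ) - (wordLength T (π y) : ℝ))
            ≤ (M : ℝ) * (wordLength T ((u n)⁻¹ * π y) : ℝ) :=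
          mul_le_mul_of_nonneg_left i2 hM0.le
        nlinarith [i1, hb, hm, p1, p2]
      have e2 : max (wordDist S (v n) (1 : G)) ((M : ℝ) * wordDist T (π (v n)) (π (1 : G)))
          = (M : ℝ) * wordDist T (π (v n)) (π (1 : G)) := by
        apply max_eq_right
        rw [hv1 n, map_one]
        show (wordLength S ((v n)⁻¹ * 1) : ℝ) ≤ (M : ℝ) * (wordLength T ((u n)⁻¹ * 1) : ℝ)
        rw [mul_one, mul_one, wl_inv hS, wl_inv hT]
        have : C * (wordLength T (u n) : ℝ) ≤ (M : ℝ) * (wordLength T (u n) : ℝ) :=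
          mul_le_mul_of_nonneg_right hM.le (Nat.cast_nonneg _)
        linarith
      show max (wordDist S (v n) y) ((M : ℝ) * wordDist T (π (v n)) (π y))
          - max (wordDist S (v n) 1) ((M : ℝ) * wordDist T (π (v n)) (π 1))
          = (M : ℝ) * (wordDist T (u n) (π y) - wordDist T (u n) 1)
      rw [e1, e2, hv1 n, map_one]
      ring
    exact Tendsto.congr' (EventuallyEq.symm hev) ((hu (π y)).const_mul (M : ℝ))
  · -- f is not a Busemann function of D
    intro x heq
    apply hnb (π x)
    have h1zero : h 1 = 0 := by
      have t0 : Tendsto (fun _ : ℕ => (0 : ℝ)) atTop (𝓝 (h 1)) := by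
        have := hu 1
        simpa [bus] using this
      exact tendsto_nhds_unique t0 tendsto_const_nhds
    have key : ∀ q : H, (M : ℝ) * h q = (M : ℝ) * (wordLength T ((π x)⁻¹ * q) : ℝ)
        - max (wordDist S x (1 : G)) ((M : ℝ) * wordDist T (π x) (π (1 : G))) := by
      intro q
      obtain ⟨z, hz1, hz2⟩ := h2 ((π x)⁻¹ * q)
      have hq : π (x * z) = q := by
        rw [map_mul, hz1, mul_inv_cancel_left]
      have hbase := congrFun heq (x * z)
      simp only [bus] at hbase
      have emax : max (wordDist S x (x * z)) ((M : ℝ) * wordDist T (π x) (π (x * z)))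
          = (M : ℝ) * (wordLength T ((π x)⁻¹ * q) : ℝ) := by
        have e : wordDist T (π x) (π (x * z)) = (wordLength T ((π x)⁻¹ * q) : ℝ) := by
          unfold wordDist
          rw [hq]
        rw [e]
        apply max_eq_right
        show (wordLength S (x⁻¹ * (x * z)) : ℝ) ≤ _
        rw [inv_mul_cancel_left]
        have hz2' : (wordLength S z : ℝ) ≤ C * (wordLength T ((π x)⁻¹ * q) : ℝ) := hz2
        have : C * (wordLength T ((π x)⁻¹ * q) : ℝ)
            ≤ (M : ℝ) * (wordLength T ((π x)⁻¹ * q) : ℝ) :=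
          mul_le_mul_of_nonneg_right hM.le (Nat.cast_nonneg _)
        linarith
      rw [emax, hq] at hbase
      exact hbase
    have key1 := key 1
    rw [h1zero, mul_zero, mul_one] at key1
    funext q
    have keyq := key q
    have hbusT : bus (wordDist T) (π x) q
        = (wordLength T ((π x)⁻¹ * q) : ℝ) - (wordLength T (π x)⁻¹ : ℝ) := by
      simp [bus, wordDist]
    have : (M : ℝ) * h q = (M : ℝ) * bus (wordDist T) (π x) q := by
      rw [hbusT]
      rw [keyq]
      linarith [key1]
    exact mul_left_cancel₀ (ne_of_gt hM0) this
  · -- injection between orbits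
    have keyact : ∀ (x y : G),
        act x (fun x => (M : ℝ) * h (π x)) y = (M : ℝ) * act (π x) h (π y) := by
      intro x y
      simp [act, map_mul, map_inv, mul_sub]
    refine ⟨fun g => ⟨act (π g.2.choose) h, ⟨π g.2.choose, rfl⟩⟩, ?_⟩
    intro g1 g2 hg
    have hval : act (π g1.2.choose) h = act (π g2.2.choose) h := by
      have := congrArg Subtype.val hg
      simpa using this
    apply Subtype.ext
    rw [← g1.2.choose_spec, ← g2.2.choose_spec]
    funext y
    simp only [keyact, hval]
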